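/- Let H, H₁, H₂ ⊆ ℝⁿ be halfspaces such that (1/2,…,1/2) ∈ H and H ∩ {0,1}ⁿ ⊆ H₁ ∪ H₂. Then there exist i ∈ {1,2} and a point y ∈ ℝⁿ such that y ∈ H_i, at most two coordinates of y lie in {0,1}, and every other coordinate of y equals 1/2. -/

import Mathlib

open Finset

private lemma abs_add_le_max' {a b : ℝ} (h : a * b ≤ 0) : |a + b| ≤ max |a| |b| := by
  rcases le_or_gt 0 a with ha | ha <;> rcases le_or_gt 0 b with hb | hb
  · have h0 : a * b = 0 := le_antisymm h (mul_nonneg ha hb)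
    rcases mul_eq_zero.mp h0 with h1 | h1 <;> simp [h1]
  · rw [abs_of_nonneg ha, abs_of_neg hb]
    rcases le_or_gt 0 (a + b) with hs | hs
    · rw [abs_of_nonneg hs]; exact le_max_of_le_left (by linarith)
    · rw [abs_of_neg hs]; exact le_max_of_le_right (by linarith)
  · rw [abs_of_neg ha, abs_of_nonneg hb]
    rcases le_or_gt 0 (a + b) with hs | hs
    · rw [abs_of_nonneg hs]; exact le_max_of_le_right (by linarith)
    · rw [abs_of_neg hs]; exact le_max_of_le_left (by linarith)
  · nlinarith

private lemma cancel_le' {a b e : ℝ} (h : e = -1 ∧ 0 ≤ a * b ∨ e = 1 ∧ a * b ≤ 0) :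
    |a + e * b| ≤ max |a| |b| := by
  rcases h with ⟨rfl, h⟩ | ⟨rfl, h⟩
  · have := abs_add_le_max' (show a * (-1 * b) ≤ 0 by nlinarith)
    simpa using this
  · have := abs_add_le_max' (show a * (1 * b) ≤ 0 by nlinarith)
    simpa using this

private lemma mul_nonneg_of_iff' {a b : ℝ} (h : 0 ≤ a ↔ 0 ≤ b) : 0 ≤ a * b := by
  rcases le_or_gt 0 a with ha | ha
  · exact mul_nonneg ha (h.mp ha)
  · have hb : b < 0 := by
      by_contra hb
      exact absurd (h.mpr (not_lt.mp hb)) (not_le.mpr ha)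
    exact le_of_lt (mul_pos_of_neg_of_neg ha hb)

private lemma mul_nonpos_of_not_iff' {a b : ℝ} (h : ¬(0 ≤ a ↔ 0 ≤ b)) : a * b ≤ 0 := by
  rcases le_or_gt 0 a with ha | ha <;> rcases le_or_gt 0 b with hb | hb
  · tauto
  · nlinarith
  · nlinarith
  · exact absurd (iff_of_false (not_le.mpr ha) (not_le.mpr hb)) h

private lemma update_hyps' {ι : Type*} [DecidableEq ι] (s : Finset ι) (u : ι → ℝ) (α : ℝ)
    (i j : ι) (hi : i ∈ s) (hj : j ∈ s) (hij : i ≠ j) (z : ℝ) (hz : |z| ≤ max |u i| |u j|)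
    (hu : ∀ k ∈ s, |u k| < α)
    (huu : ∀ k ∈ s, ∀ l ∈ s, k ≠ l → |u k| + |u l| < α) :
    (∀ k ∈ s.erase j, |Function.update u i z k| < α) ∧
    (∀ k ∈ s.erase j, ∀ l ∈ s.erase j, k ≠ l →
      |Function.update u i z k| + |Function.update u i z l| < α) := by
  have key : ∀ m ∈ s.erase j, m ≠ i → |z| + |u m| < α := by
    intro m hm hmi
    have hmj : m ≠ j := (Finset.mem_erase.mp hm).1
    have hms : m ∈ s := Finset.mem_of_mem_erase hm
    calc |z| + |u m| ≤ max |u i| |u j| + |u m| := by linarith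
      _ < α := by
        rcases max_cases |u i| |u j| with ⟨heq, _⟩ | ⟨heq, _⟩ <;> rw [heq]
        · exact huu i hi m hms (Ne.symm hmi)
        · exact huu j hj m hms (Ne.symm hmj)
  constructor
  · intro k hk
    by_cases hki : k = i
    · subst hki
      rw [Function.update_self]
      calc |z| ≤ max |u k| |u j| := hz
        _ < α := max_lt (hu k hi) (hu j hj)
    · rw [Function.update_of_ne hki]
      exact hu k (Finset.mem_of_mem_erase hk)
  · intro k hk l hl hkl
    by_cases hki : k = i
    · subst hki
      have hli : l ≠ k := Ne.symm hkl
      rw [Function.update_self, Function.update_of_ne hli]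
      exact key l hl hli
    · by_cases hli : l = i
      · subst hli
        rw [Function.update_self, Function.update_of_ne hki]
        have := key k hk hki
        linarith
      · rw [Function.update_of_ne hki, Function.update_of_ne hli]
        exact huu k (Finset.mem_of_mem_erase hk) l (Finset.mem_of_mem_erase hl) hkl

private lemma sum_merge' {ι : Type*} [DecidableEq ι] (s : Finset ι) (u ε' : ι → ℝ) (e : ℝ)
    (i j : ι) (hi : i ∈ s) (hj : j ∈ s) (hij : i ≠ j) :
    ∑ k ∈ s, (Function.update ε' j (e * ε' i)) k * u k
      = ∑ k ∈ s.erase j, ε' k * (Function.update u i (u i + e * u j)) k := by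
  have hi' : i ∈ s.erase j := Finset.mem_erase.mpr ⟨hij, hi⟩
  rw [← Finset.sum_erase_add s _ hj, ← Finset.sum_erase_add (s.erase j) _ hi',
      ← Finset.sum_erase_add (s.erase j) (fun k => ε' k * (Function.update u i (u i + e * u j)) k) hi']
  have h1 : ∑ k ∈ (s.erase j).erase i, (Function.update ε' j (e * ε' i)) k * u k
      = ∑ k ∈ (s.erase j).erase i, ε' k * (Function.update u i (u i + e * u j)) k := by
    apply Finset.sum_congr rfl
    intro k hk
    have hki : k ≠ i := (Finset.mem_erase.mp hk).1
    have hkj : k ≠ j := (Finset.mem_erase.mp (Finset.mem_of_mem_erase hk)).1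
    rw [Function.update_of_ne hkj, Function.update_of_ne hki]
  rw [h1, Function.update_self, Function.update_self, Function.update_of_ne hij]
  ring

private lemma balance' {ι : Type*} [DecidableEq ι] (α β : ℝ) (hα : 0 < α) (hβ : 0 < β)
    (s : Finset ι) :
    ∀ (u v : ι → ℝ),
      (∀ i ∈ s, |u i| < α) → (∀ i ∈ s, |v i| < β) →
      (∀ i ∈ s, ∀ j ∈ s, i ≠ j → |u i| + |u j| < α) →
      (∀ i ∈ s, ∀ j ∈ s, i ≠ j → |v i| + |v j| < β) →
      ∃ ε : ι → ℝ, (∀ i, ε i = 1 ∨ ε i = -1) ∧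
        |∑ i ∈ s, ε i * u i| < α ∧ |∑ i ∈ s, ε i * v i| < β := by
  induction s using Finset.strongInduction with
  | _ s ih =>
    intro u v hu hv huu hvv
    by_cases hcard : s.card ≤ 2
    · obtain h0 | h1 | h2 : s.card = 0 ∨ s.card = 1 ∨ s.card = 2 := by omega
      · rw [Finset.card_eq_zero] at h0
        subst h0
        exact ⟨fun _ => 1, fun _ => Or.inl rfl, by simpa using hα, by simpa using hβ⟩
      · obtain ⟨i, rfl⟩ := Finset.card_eq_one.mp h1
        refine ⟨fun _ => 1, fun _ => Or.inl rfl, ?_, ?_⟩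
        · simpa using hu i (Finset.mem_singleton_self i)
        · simpa using hv i (Finset.mem_singleton_self i)
      · obtain ⟨i, j, hij, rfl⟩ := Finset.card_eq_two.mp h2
        have hi : i ∈ ({i, j} : Finset ι) := by simp
        have hj : j ∈ ({i, j} : Finset ι) := by simp
        set e : ℝ := if (0 ≤ u i ↔ 0 ≤ u j) then (-1 : ℝ) else 1 with he
        have hE : e = -1 ∧ 0 ≤ u i * u j ∨ e = 1 ∧ u i * u j ≤ 0 := by
          rw [he]; split_ifs with h
          · exact Or.inl ⟨rfl, mul_nonneg_of_iff' h⟩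
          · exact Or.inr ⟨rfl, mul_nonpos_of_not_iff' h⟩
        have he1 : e = 1 ∨ e = -1 := by rcases hE with ⟨h, _⟩ | ⟨h, _⟩ <;> simp [h]
        refine ⟨fun k => if k = i then 1 else e, ?_, ?_, ?_⟩
        · intro k; by_cases hk : k = i <;> simp [hk, he1]
        · rw [Finset.sum_pair hij]
          simp only [if_pos rfl, if_true, if_neg (Ne.symm hij), one_mul]
          calc |u i + e * u j| ≤ max |u i| |u j| := cancel_le' hE
            _ < α := max_lt (hu i hi) (hu j hj)
        · rw [Finset.sum_pair hij]
          simp only [if_pos rfl, if_true, if_neg (Ne.symm hij), one_mul]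
          have h1 : |v i + e * v j| ≤ |v i| + |e * v j| := abs_add_le _ _
          have h2 : |e * v j| = |v j| := by rcases he1 with h | h <;> simp [h]
          have := hvv i hi j hj hij
          linarith
    · push_neg at hcard
      obtain ⟨a, b, c, ha, hb, hc, hab, hac, hbc⟩ := Finset.two_lt_card_iff.mp hcard
      have key : ∃ i ∈ s, ∃ j ∈ s, i ≠ j ∧ ((0 ≤ u i ↔ 0 ≤ v i) ↔ (0 ≤ u j ↔ 0 ≤ v j)) := by
        by_cases hab' : ((0 ≤ u a ↔ 0 ≤ v a) ↔ (0 ≤ u b ↔ 0 ≤ v b))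
        · exact ⟨a, ha, b, hb, hab, hab'⟩
        · by_cases hac' : ((0 ≤ u a ↔ 0 ≤ v a) ↔ (0 ≤ u c ↔ 0 ≤ v c))
          · exact ⟨a, ha, c, hc, hac, hac'⟩
          · exact ⟨b, hb, c, hc, hbc, by tauto⟩
      obtain ⟨i, hi, j, hj, hij, hσ⟩ := key
      set e : ℝ := if (0 ≤ u i ↔ 0 ≤ u j) then (-1 : ℝ) else 1 with he
      have hE : (e = -1 ∧ 0 ≤ u i * u j ∧ 0 ≤ v i * v j) ∨
          (e = 1 ∧ u i * u j ≤ 0 ∧ v i * v j ≤ 0) := by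
        rw [he]; split_ifs with h
        · exact Or.inl ⟨rfl, mul_nonneg_of_iff' h, mul_nonneg_of_iff' (by tauto)⟩
        · exact Or.inr ⟨rfl, mul_nonpos_of_not_iff' h, mul_nonpos_of_not_iff' (by tauto)⟩
      have he1 : e = 1 ∨ e = -1 := by rcases hE with ⟨h, _⟩ | ⟨h, _⟩ <;> simp [h]
      have heu : |u i + e * u j| ≤ max |u i| |u j| := by
        apply cancel_le'; rcases hE with ⟨h1, h2, _⟩ | ⟨h1, h2, _⟩
        · exact Or.inl ⟨h1, h2⟩
        · exact Or.inr ⟨h1, h2⟩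
      have hev : |v i + e * v j| ≤ max |v i| |v j| := by
        apply cancel_le'; rcases hE with ⟨h1, _, h2⟩ | ⟨h1, _, h2⟩
        · exact Or.inl ⟨h1, h2⟩
        · exact Or.inr ⟨h1, h2⟩
      obtain ⟨hu1', hu2'⟩ := update_hyps' s u α i j hi hj hij _ heu hu huu
      obtain ⟨hv1', hv2'⟩ := update_hyps' s v β i j hi hj hij _ hev hv hvv
      obtain ⟨ε', hε', hεu, hεv⟩ := ih (s.erase j) (Finset.erase_ssubset hj) _ _ hu1' hv1' hu2' hv2'
      refine ⟨Function.update ε' j (e * ε' i), ?_, ?_, ?_⟩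
      · intro k
        by_cases hk : k = j
        · subst hk
          rw [Function.update_self]
          rcases he1 with h | h <;> rcases hε' i with h' | h' <;> simp [h, h']
        · rw [Function.update_of_ne hk]; exact hε' k
      · rw [sum_merge' s u ε' e i j hi hj hij]; exact hεu
      · rw [sum_merge' s v ε' e i j hi hj hij]; exact hεv


private lemma sum_one' {n : ℕ} (w : Fin n → ℝ) (i : Fin n) (b : ℝ) :
    ∑ k, w k * (if k = i then b else 1/2) = (∑ k, w k * (1/2:ℝ)) + w i * (b - 1/2) := by
  have h : ∀ k : Fin n, w k * (if k = i then b else 1/2)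
      = w k * (1/2) + (if k = i then w k * (b - 1/2) else 0) := by
    intro k
    by_cases hk : k = i
    · subst hk; rw [if_pos rfl, if_pos rfl]; ring
    · rw [if_neg hk, if_neg hk]; ring
  rw [Finset.sum_congr rfl (fun k _ => h k), Finset.sum_add_distrib,
      Finset.sum_ite_eq' Finset.univ i (fun k => w k * (b - 1/2))]
  simp

private lemma sum_two' {n : ℕ} (w : Fin n → ℝ) (i j : Fin n) (hij : i ≠ j) (b₁ b₂ : ℝ) :
    ∑ k, w k * (if k = i then b₁ else if k = j then b₂ else 1/2)
      = (∑ k, w k * (1/2:ℝ)) + w i * (b₁ - 1/2) + w j * (b₂ - 1/2) := by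
  have h : ∀ k : Fin n, w k * (if k = i then b₁ else if k = j then b₂ else 1/2)
      = w k * (1/2) + ((if k = i then w k * (b₁ - 1/2) else 0)
        + (if k = j then w k * (b₂ - 1/2) else 0)) := by
    intro k
    by_cases h1 : k = i
    · subst h1; simp [hij]; ring
    · by_cases h2 : k = j
      · subst h2; simp [h1]; ring
      · simp [h1, h2]
  rw [Finset.sum_congr rfl (fun k _ => h k), Finset.sum_add_distrib, Finset.sum_add_distrib,
      Finset.sum_ite_eq' Finset.univ i (fun k => w k * (b₁ - 1/2)),
      Finset.sum_ite_eq' Finset.univ j (fun k => w k * (b₂ - 1/2))]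
  simp [add_assoc]

/-- Let `H = {x : w·x ≥ c}`, `H₁ = {x : w₁·x ≥ c₁}`,
`H₂ = {x : w₂·x ≥ c₂}` be halfspaces in `ℝⁿ` such that `H` contains the all-`1/2`
point and `H ∩ {0,1}ⁿ ⊆ H₁ ∪ H₂`. Then some `H_i` contains a point `y` having at most
two coordinates in `{0,1}` and all other coordinates equal to `1/2`. -/
theorem good_halfspace_cover {n : ℕ} (w w₁ w₂ : Fin n → ℝ) (c c₁ c₂ : ℝ)
    (hgood : (∑ i, w i * (1 / 2 : ℝ)) ≥ c)
    (hcov : ∀ x : Fin n → ℝ, (∀ i, x i = 0 ∨ x i = 1) →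
      (∑ i, w i * x i) ≥ c →
      ((∑ i, w₁ i * x i) ≥ c₁ ∨ (∑ i, w₂ i * x i) ≥ c₂)) :
    ∃ (y : Fin n → ℝ) (I : Finset (Fin n)), I.card ≤ 2 ∧
      (∀ i ∈ I, y i = 0 ∨ y i = 1) ∧ (∀ i ∉ I, y i = 1 / 2) ∧
      ((∑ i, w₁ i * y i) ≥ c₁ ∨ (∑ i, w₂ i * y i) ≥ c₂) := by
  by_contra hcon
  push_neg at hcon
  -- center point constraints
  have hcenter := hcon (fun _ => 1/2) ∅ (by simp) (by simp) (fun _ _ => rfl)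
  have hα : (0:ℝ) < c₁ - ∑ i, w₁ i * (1/2) := by linarith [hcenter.1]
  have hβ : (0:ℝ) < c₂ - ∑ i, w₂ i * (1/2) := by linarith [hcenter.2]
  -- single-coordinate constraints
  have hsingle : ∀ (i : Fin n) (b : ℝ), (b = 0 ∨ b = 1) →
      (∑ k, w₁ k * (1/2:ℝ)) + w₁ i * (b - 1/2) < c₁ ∧
      (∑ k, w₂ k * (1/2:ℝ)) + w₂ i * (b - 1/2) < c₂ := by
    intro i b hb
    have h := hcon (fun k => if k = i then b else 1/2) {i} (by simp)
      (by intro k hk; rw [Finset.mem_singleton] at hk; subst hk; simpa using hb)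
      (by intro k hk; rw [Finset.mem_singleton] at hk; simp [hk])
    rwa [sum_one' w₁ i b, sum_one' w₂ i b] at h
  -- pair constraints
  have hpair : ∀ (i j : Fin n), i ≠ j → ∀ (b₁ b₂ : ℝ), (b₁ = 0 ∨ b₁ = 1) → (b₂ = 0 ∨ b₂ = 1) →
      (∑ k, w₁ k * (1/2:ℝ)) + w₁ i * (b₁ - 1/2) + w₁ j * (b₂ - 1/2) < c₁ ∧
      (∑ k, w₂ k * (1/2:ℝ)) + w₂ i * (b₁ - 1/2) + w₂ j * (b₂ - 1/2) < c₂ := by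
    intro i j hij b₁ b₂ hb₁ hb₂
    have h := hcon (fun k => if k = i then b₁ else if k = j then b₂ else 1/2) {i, j}
      (by simpa using Finset.card_insert_le i {j})
      (by
        intro k hk
        rcases Finset.mem_insert.mp hk with rfl | hk
        · simpa using hb₁
        · rw [Finset.mem_singleton] at hk; subst hk
          simpa [Ne.symm hij] using hb₂)
      (by
        intro k hk
        simp only [Finset.mem_insert, Finset.mem_singleton, not_or] at hk
        simp [hk.1, hk.2])
    rwa [sum_two' w₁ i j hij b₁ b₂, sum_two' w₂ i j hij b₁ b₂] at h
  -- absolute-value constraints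
  have hu : ∀ i ∈ Finset.univ, |w₁ i / 2| < c₁ - ∑ k, w₁ k * (1/2:ℝ) := by
    intro i _
    have h1 := (hsingle i 1 (Or.inr rfl)).1
    have h0 := (hsingle i 0 (Or.inl rfl)).1
    rw [abs_lt]; constructor <;> nlinarith
  have hv : ∀ i ∈ Finset.univ, |w₂ i / 2| < c₂ - ∑ k, w₂ k * (1/2:ℝ) := by
    intro i _
    have h1 := (hsingle i 1 (Or.inr rfl)).2
    have h0 := (hsingle i 0 (Or.inl rfl)).2
    rw [abs_lt]; constructor <;> nlinarith
  have huu : ∀ i ∈ Finset.univ, ∀ j ∈ Finset.univ, i ≠ j →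
      |w₁ i / 2| + |w₁ j / 2| < c₁ - ∑ k, w₁ k * (1/2:ℝ) := by
    intro i _ j _ hij
    have h00 := (hpair i j hij 0 0 (Or.inl rfl) (Or.inl rfl)).1
    have h01 := (hpair i j hij 0 1 (Or.inl rfl) (Or.inr rfl)).1
    have h10 := (hpair i j hij 1 0 (Or.inr rfl) (Or.inl rfl)).1
    have h11 := (hpair i j hij 1 1 (Or.inr rfl) (Or.inr rfl)).1
    rcases abs_cases (w₁ i / 2) with ⟨e1, _⟩ | ⟨e1, _⟩ <;>
      rcases abs_cases (w₁ j / 2) with ⟨e2, _⟩ | ⟨e2, _⟩ <;> rw [e1, e2] <;> nlinarith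
  have hvv : ∀ i ∈ Finset.univ, ∀ j ∈ Finset.univ, i ≠ j →
      |w₂ i / 2| + |w₂ j / 2| < c₂ - ∑ k, w₂ k * (1/2:ℝ) := by
    intro i _ j _ hij
    have h00 := (hpair i j hij 0 0 (Or.inl rfl) (Or.inl rfl)).2
    have h01 := (hpair i j hij 0 1 (Or.inl rfl) (Or.inr rfl)).2
    have h10 := (hpair i j hij 1 0 (Or.inr rfl) (Or.inl rfl)).2
    have h11 := (hpair i j hij 1 1 (Or.inr rfl) (Or.inr rfl)).2
    rcases abs_cases (w₂ i / 2) with ⟨e1, _⟩ | ⟨e1, _⟩ <;>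
      rcases abs_cases (w₂ j / 2) with ⟨e2, _⟩ | ⟨e2, _⟩ <;> rw [e1, e2] <;> nlinarith
  obtain ⟨ε, hε, hεu, hεv⟩ := balance' _ _ hα hβ Finset.univ
    (fun i => w₁ i / 2) (fun i => w₂ i / 2) hu hv huu hvv
  -- sum computation for cube points
  have hsum : ∀ (W : Fin n → ℝ) (t : ℝ),
      ∑ k, W k * (1/2 + t * (ε k * (1/2))) = (∑ k, W k * (1/2:ℝ)) + t * ∑ k, ε k * (W k / 2) := by
    intro W t
    have h : ∀ k : Fin n, W k * (1/2 + t * (ε k * (1/2)))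
        = W k * (1/2) + t * (ε k * (W k / 2)) := fun k => by ring
    rw [Finset.sum_congr rfl (fun k _ => h k), Finset.sum_add_distrib, ← Finset.mul_sum]
  have hx01 : ∀ t : ℝ, (t = 1 ∨ t = -1) →
      ∀ k : Fin n, (1/2 + t * (ε k * (1/2)) : ℝ) = 0 ∨ (1/2 + t * (ε k * (1/2)) : ℝ) = 1 := by
    intro t ht k
    rcases ht with rfl | rfl <;> rcases hε k with h | h <;> rw [h] <;> norm_num
  have habs₁ := abs_lt.mp hεu
  have habs₂ := abs_lt.mp hεv
  by_cases hx : (∑ k, w k * (1/2 + 1 * (ε k * (1/2)))) ≥ c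
  · rcases hcov _ (hx01 1 (Or.inl rfl)) hx with h | h
    · rw [hsum w₁ 1] at h; linarith [habs₁.2]
    · rw [hsum w₂ 1] at h; linarith [habs₂.2]
  · have hx' : (∑ k, w k * (1/2 + (-1) * (ε k * (1/2)))) ≥ c := by
      push_neg at hx
      rw [hsum w 1] at hx
      rw [hsum w (-1)]
      linarith
    rcases hcov _ (hx01 (-1) (Or.inr rfl)) hx' with h | h
    · rw [hsum w₁ (-1)] at h; linarith [habs₁.1]
    · rw [hsum w₂ (-1)] at h; linarith [habs₂.1]
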